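/- Let p > 1 be real and k, n even positive integers with k > n+1. For every real a with |a| ≤ 2 p^{(2k-n-1)/2}, p^{nk/2 - n(n+1)/4 + n²/8} ∏_{i=1}^{n/2} (1 - p^{-(i - 1/2)})² ≤ ∏_{i=1}^{n/2} (a + p^{k-i} + p^{k-n-1+i}) ≤ p^{nk/2 - n(n+1)/4 + n²/8} ∏_{i=1}^{n/2} (1 + p^{-(i - 1/2)})². -/

import Mathlib

open Real

private lemma prod_rpow_sum' (p : ℝ) (hp : 0 < p) (s : Finset ℕ) (f : ℕ → ℝ) :
    ∏ i ∈ s, p ^ f i = p ^ (∑ i ∈ s, f i) := by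
  induction s using Finset.induction with
  | empty => simp
  | insert _ _ h ih => rw [Finset.prod_insert h, Finset.sum_insert h, ih, ← Real.rpow_add hp]

private lemma gaussR (m : ℕ) : ((∑ i ∈ Finset.Icc 1 m, i : ℕ) : ℝ) = m * (m + 1) / 2 := by
  induction m with
  | zero => simp
  | succ j ih =>
    rw [Finset.sum_Icc_succ_top (by omega)]
    push_cast [ih]
    ring

private lemma reidx (m : ℕ) (c : ℝ) (hc : c = 2 * m) (g : ℝ → ℝ) :
    ∏ i ∈ Finset.Icc 1 m, g ((2 * (i : ℝ) - c - 1) / 2) =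
      ∏ i ∈ Finset.Icc 1 m, g (-((i : ℝ) - 1 / 2)) := by
  subst hc
  refine Finset.prod_nbij' (fun i => m + 1 - i) (fun i => m + 1 - i) ?_ ?_ ?_ ?_ ?_
  · intro i hi; simp only [Finset.mem_Icc] at *; omega
  · intro i hi; simp only [Finset.mem_Icc] at *; omega
  · intro i hi; simp only [Finset.mem_Icc] at hi
    show m + 1 - (m + 1 - i) = i; omega
  · intro i hi; simp only [Finset.mem_Icc] at hi
    show m + 1 - (m + 1 - i) = i; omega
  · intro i hi
    simp only [Finset.mem_Icc] at hi
    congr 1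
    have h1 : i ≤ m + 1 := by omega
    push_cast [Nat.cast_sub h1]
    ring

/-- The main bounds for g_p(a) on the Deligne interval. -/
theorem gp_bounds (p : ℝ) (hp : 1 < p) (k n : ℕ) (hk : Even k) (hn : Even n)
    (hkpos : 0 < k) (hnpos : 0 < n) (hkn : k > n + 1)
    (a : ℝ) (ha : |a| ≤ 2 * p ^ ((2 * (k : ℝ) - n - 1) / 2)) :
    p ^ ((n * k : ℝ) / 2 - (n * (n + 1) : ℝ) / 4 + (n : ℝ) ^ 2 / 8) *
        ∏ i ∈ Finset.Icc 1 (n / 2), (1 - p ^ (-((i : ℝ) - 1 / 2))) ^ 2 ≤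
      ∏ i ∈ Finset.Icc 1 (n / 2),
        (a + p ^ ((k : ℝ) - i) + p ^ ((k : ℝ) - (n : ℝ) - 1 + i)) ∧
    ∏ i ∈ Finset.Icc 1 (n / 2),
        (a + p ^ ((k : ℝ) - i) + p ^ ((k : ℝ) - (n : ℝ) - 1 + i)) ≤
      p ^ ((n * k : ℝ) / 2 - (n * (n + 1) : ℝ) / 4 + (n : ℝ) ^ 2 / 8) *
        ∏ i ∈ Finset.Icc 1 (n / 2), (1 + p ^ (-((i : ℝ) - 1 / 2))) ^ 2 := by
  have hpos : (0 : ℝ) < p := lt_trans one_pos hp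
  obtain ⟨m, hmm⟩ := hn
  have hm2 : n / 2 = m := by omega
  have hnr : (n : ℝ) = 2 * m := by
    have : n = 2 * m := by omega
    rw [this]; push_cast; ring
  rw [hm2]
  obtain ⟨ha1, ha2⟩ := abs_le.mp ha
  -- expansion identities
  have elow : ∀ i : ℕ, p ^ ((k : ℝ) - i) * (1 - p ^ ((2 * (i : ℝ) - n - 1) / 2)) ^ 2
      = p ^ ((k : ℝ) - i) + p ^ ((k : ℝ) - (n : ℝ) - 1 + i)
        - 2 * p ^ ((2 * (k : ℝ) - n - 1) / 2) := by
    intro i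
    have h1 : ((k : ℝ) - (n : ℝ) - 1 + i)
        = ((k : ℝ) - i) + ((2 * (i : ℝ) - n - 1) / 2) + ((2 * (i : ℝ) - n - 1) / 2) := by ring
    have h2 : ((2 * (k : ℝ) - n - 1) / 2) = ((k : ℝ) - i) + ((2 * (i : ℝ) - n - 1) / 2) := by
      ring
    rw [h1, h2, Real.rpow_add hpos, Real.rpow_add hpos]
    ring
  have ehigh : ∀ i : ℕ, p ^ ((k : ℝ) - i) * (1 + p ^ ((2 * (i : ℝ) - n - 1) / 2)) ^ 2
      = p ^ ((k : ℝ) - i) + p ^ ((k : ℝ) - (n : ℝ) - 1 + i)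
        + 2 * p ^ ((2 * (k : ℝ) - n - 1) / 2) := by
    intro i
    have h1 : ((k : ℝ) - (n : ℝ) - 1 + i)
        = ((k : ℝ) - i) + ((2 * (i : ℝ) - n - 1) / 2) + ((2 * (i : ℝ) - n - 1) / 2) := by ring
    have h2 : ((2 * (k : ℝ) - n - 1) / 2) = ((k : ℝ) - i) + ((2 * (i : ℝ) - n - 1) / 2) := by
      ring
    rw [h1, h2, Real.rpow_add hpos, Real.rpow_add hpos]
    ring
  have hlow : ∀ i ∈ Finset.Icc 1 m,
      p ^ ((k : ℝ) - i) * (1 - p ^ ((2 * (i : ℝ) - n - 1) / 2)) ^ 2 ≤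
        a + p ^ ((k : ℝ) - i) + p ^ ((k : ℝ) - (n : ℝ) - 1 + i) := by
    intro i _
    rw [elow i]; linarith
  have hhigh : ∀ i ∈ Finset.Icc 1 m,
      a + p ^ ((k : ℝ) - i) + p ^ ((k : ℝ) - (n : ℝ) - 1 + i) ≤
        p ^ ((k : ℝ) - i) * (1 + p ^ ((2 * (i : ℝ) - n - 1) / 2)) ^ 2 := by
    intro i _
    rw [ehigh i]; linarith
  have hnn : ∀ i ∈ Finset.Icc 1 m,
      (0 : ℝ) ≤ p ^ ((k : ℝ) - i) * (1 - p ^ ((2 * (i : ℝ) - n - 1) / 2)) ^ 2 := by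
    intro i _; positivity
  have htermnn : ∀ i ∈ Finset.Icc 1 m,
      (0 : ℝ) ≤ a + p ^ ((k : ℝ) - i) + p ^ ((k : ℝ) - (n : ℝ) - 1 + i) :=
    fun i hi => le_trans (hnn i hi) (hlow i hi)
  -- the sum of exponents
  have hsum : ∑ i ∈ Finset.Icc 1 m, ((k : ℝ) - i)
      = (n * k : ℝ) / 2 - (n * (n + 1) : ℝ) / 4 + (n : ℝ) ^ 2 / 8 := by
    have hgauss := gaussR m
    push_cast at hgauss
    rw [Finset.sum_sub_distrib, Finset.sum_const, Nat.card_Icc, Nat.add_sub_cancel, hgauss,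
      nsmul_eq_mul, hnr]
    ring
  -- the product identity for a generic sign
  have hprod : ∀ s : ℝ,
      ∏ i ∈ Finset.Icc 1 m, p ^ ((k : ℝ) - i) * (1 + s * p ^ ((2 * (i : ℝ) - n - 1) / 2)) ^ 2
      = p ^ ((n * k : ℝ) / 2 - (n * (n + 1) : ℝ) / 4 + (n : ℝ) ^ 2 / 8) *
          ∏ i ∈ Finset.Icc 1 m, (1 + s * p ^ (-((i : ℝ) - 1 / 2))) ^ 2 := by
    intro s
    rw [Finset.prod_mul_distrib, prod_rpow_sum' p hpos, hsum]
    congr 1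
    exact reidx m (n : ℝ) hnr (fun x => (1 + s * p ^ x) ^ 2)
  constructor
  · calc p ^ ((n * k : ℝ) / 2 - (n * (n + 1) : ℝ) / 4 + (n : ℝ) ^ 2 / 8) *
          ∏ i ∈ Finset.Icc 1 m, (1 - p ^ (-((i : ℝ) - 1 / 2))) ^ 2
        = ∏ i ∈ Finset.Icc 1 m,
            p ^ ((k : ℝ) - i) * (1 - p ^ ((2 * (i : ℝ) - n - 1) / 2)) ^ 2 := by
          have := hprod (-1)
          simp only [neg_one_mul, ← sub_eq_add_neg] at this
          rw [this]
      _ ≤ _ := Finset.prod_le_prod hnn hlow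
  · calc ∏ i ∈ Finset.Icc 1 m, (a + p ^ ((k : ℝ) - i) + p ^ ((k : ℝ) - (n : ℝ) - 1 + i))
        ≤ ∏ i ∈ Finset.Icc 1 m,
            p ^ ((k : ℝ) - i) * (1 + p ^ ((2 * (i : ℝ) - n - 1) / 2)) ^ 2 :=
          Finset.prod_le_prod htermnn hhigh
      _ = _ := by
          have := hprod 1
          simp only [one_mul] at this
          rw [this]
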